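/- Let n ≥ 2, let D ⊂ ℂⁿ be a bounded open set with defining function ρ : ℂⁿ → ℝ continuously differentiable, D = {ρ < 0}, and suppose ⟨∂ρ(w), w − z⟩ ≠ 0 for every w ∈ bD and every z ∈ D. Then for every f ∈ L¹(bD, Σ), the function F(z) = (2πi)^{−n} ∫_{bD} f(w) ⟨∂ρ(w), w − z⟩^{−n} dΣ(w) is well defined and holomorphic on D (i.e. F is complex-differentiable on D as a function of n complex variables). -/

import Mathlib

open MeasureTheory Complex

noncomputable section

instance (n : ℕ) : MeasurableSpace (EuclideanSpace ℂ (Fin n)) := borel _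
instance (n : ℕ) : BorelSpace (EuclideanSpace ℂ (Fin n)) := ⟨rfl⟩

/-- The Wirtinger derivative ∂ρ/∂w_j. -/
def wd {n : ℕ} (ρ : EuclideanSpace ℂ (Fin n) → ℝ) (w : EuclideanSpace ℂ (Fin n)) (j : Fin n) : ℂ :=
  (1 / 2 : ℂ) * ((fderiv ℝ ρ w (EuclideanSpace.single j 1) : ℂ)
    - Complex.I * (fderiv ℝ ρ w (EuclideanSpace.single j Complex.I) : ℂ))

/-- ⟨∂ρ(w), u⟩ = ∑ ∂ρ/∂w_j (w) u_j. -/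
def wpair {n : ℕ} (ρ : EuclideanSpace ℂ (Fin n) → ℝ) (w u : EuclideanSpace ℂ (Fin n)) : ℂ :=
  ∑ j, wd ρ w j * u j

/-- Iterated real directional derivative ∂_b ∂_a ρ (w). -/
def d2 {n : ℕ} (ρ : EuclideanSpace ℂ (Fin n) → ℝ) (w a b : EuclideanSpace ℂ (Fin n)) : ℝ :=
  fderiv ℝ (fun x => fderiv ℝ ρ x a) w b

/-- The coefficient ∂²ρ/∂w_j∂w̄_k (w) of the Levi form. -/
def leviCoef {n : ℕ} (ρ : EuclideanSpace ℂ (Fin n) → ℝ) (w : EuclideanSpace ℂ (Fin n))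
    (j k : Fin n) : ℂ :=
  (1 / 4 : ℂ) *
    (((d2 ρ w (EuclideanSpace.single j 1) (EuclideanSpace.single k 1)
        + d2 ρ w (EuclideanSpace.single j Complex.I) (EuclideanSpace.single k Complex.I) : ℝ) : ℂ)
      + Complex.I *
        ((d2 ρ w (EuclideanSpace.single j 1) (EuclideanSpace.single k Complex.I)
          - d2 ρ w (EuclideanSpace.single j Complex.I) (EuclideanSpace.single k 1) : ℝ) : ℂ))

/-- The Levi form L_ρ(w; v). -/
def levi {n : ℕ} (ρ : EuclideanSpace ℂ (Fin n) → ℝ) (w v : EuclideanSpace ℂ (Fin n)) : ℝ :=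
  ∑ j, ∑ k, (leviCoef ρ w j k * v j * (starRingEnd ℂ) (v k)).re

/-- Induced Lebesgue measure on bD : (2n-1)-Hausdorff measure restricted to the frontier. -/
def bM {n : ℕ} (D : Set (EuclideanSpace ℂ (Fin n))) : Measure (EuclideanSpace ℂ (Fin n)) :=
  (μH[(2 * n - 1 : ℝ)]).restrict (frontier D)

/-- The interior Cauchy–Leray integral of `f`, computed with respect to the induced
Lebesgue measure `Σ = bM D`. -/
def cauchyLeray {n : ℕ} (D : Set (EuclideanSpace ℂ (Fin n)))
    (ρ : EuclideanSpace ℂ (Fin n) → ℝ) (f : EuclideanSpace ℂ (Fin n) → ℂ)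
    (z : EuclideanSpace ℂ (Fin n)) : ℂ :=
  (1 / (2 * (Real.pi : ℂ) * Complex.I) ^ n) *
    ∫ w, f w / (wpair ρ w (w - z)) ^ n ∂(bM D)

/-- If `D ⊂ ℂⁿ` is a bounded domain with `C¹` defining function `ρ` and
`⟨∂ρ(w), w − z⟩ ≠ 0` for all `w ∈ bD`, `z ∈ D`, then for every `f ∈ L¹(bD, Σ)` the
interior Cauchy–Leray integral of `f` is well defined (the integral converges absolutely
for each `z ∈ D`) and holomorphic on `D`. -/
theorem statement17 (n : ℕ) (hn : 2 ≤ n) (D : Set (EuclideanSpace ℂ (Fin n)))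
    (hDopen : IsOpen D) (hDbd : Bornology.IsBounded D)
    (ρ : EuclideanSpace ℂ (Fin n) → ℝ) (hρ : ContDiff ℝ 1 ρ)
    (hdef : D = {z | ρ z < 0})
    (hker : ∀ w ∈ frontier D, ∀ z ∈ D, wpair ρ w (w - z) ≠ 0) :
    ∀ f : EuclideanSpace ℂ (Fin n) → ℂ, Integrable f (bM D) →
      (∀ z ∈ D, Integrable (fun w => f w / (wpair ρ w (w - z)) ^ n) (bM D)) ∧
        DifferentiableOn ℂ (cauchyLeray D ρ f) D := by
  intro f hf
  classical
  -- continuity of the Wirtinger derivative coefficients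
  have hfd : Continuous (fderiv ℝ ρ) := hρ.continuous_fderiv one_ne_zero
  have h1 : ∀ v : EuclideanSpace ℂ (Fin n), Continuous fun w => ((fderiv ℝ ρ w v : ℝ) : ℂ) :=
    fun v => Complex.continuous_ofReal.comp
      ((ContinuousLinearMap.apply ℝ ℝ v).continuous.comp hfd)
  have hwd : ∀ j, Continuous fun w => wd ρ w j := fun j =>
    continuous_const.mul ((h1 _).sub (continuous_const.mul (h1 _)))
  -- the linear map ℓ w
  set ℓ : EuclideanSpace ℂ (Fin n) → (EuclideanSpace ℂ (Fin n) →L[ℂ] ℂ) :=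
    fun w => ∑ j, wd ρ w j • (EuclideanSpace.proj j) with hℓdef
  have hℓ_apply : ∀ w u, ℓ w u = wpair ρ w u := by
    intro w u
    simp [hℓdef, wpair, ContinuousLinearMap.sum_apply, ContinuousLinearMap.smul_apply,
      smul_eq_mul]
  have hℓ_cont : Continuous ℓ :=
    continuous_finset_sum _ fun j _ => (hwd j).smul continuous_const
  have hwz : ∀ z : EuclideanSpace ℂ (Fin n), Continuous fun w => wpair ρ w (w - z) := by
    intro z
    have : Continuous fun w => ℓ w (w - z) :=
      hℓ_cont.clm_apply (continuous_id.sub continuous_const)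
    simpa only [hℓ_apply] using this
  -- frontier is compact
  have hKc : IsCompact (frontier D) :=
    Metric.isCompact_of_isClosed_isBounded isClosed_frontier
      (hDbd.closure.subset (frontier_subset_closure))
  -- key lower bound on |wpair| on compact subsets of D
  have key : ∀ S : Set (EuclideanSpace ℂ (Fin n)), IsCompact S → S ⊆ D →
      ∃ δ > (0 : ℝ), ∀ w ∈ frontier D, ∀ z ∈ S, δ ≤ ‖wpair ρ w (w - z)‖ := by
    intro S hS hSD
    rcases (frontier D).eq_empty_or_nonempty with hKe | hKne
    · exact ⟨1, one_pos, by simp [hKe]⟩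
    rcases S.eq_empty_or_nonempty with hSe | hSne
    · exact ⟨1, one_pos, by simp [hSe]⟩
    have hφ : Continuous fun p : EuclideanSpace ℂ (Fin n) × EuclideanSpace ℂ (Fin n) =>
        ‖wpair ρ p.1 (p.1 - p.2)‖ := by
      have : Continuous fun p : EuclideanSpace ℂ (Fin n) × EuclideanSpace ℂ (Fin n) =>
          ℓ p.1 (p.1 - p.2) :=
        (hℓ_cont.comp continuous_fst).clm_apply (continuous_fst.sub continuous_snd)
      simpa only [hℓ_apply] using this.norm
    obtain ⟨p, hp, hpmin⟩ := (hKc.prod hS).exists_isMinOn (hKne.prod hSne)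
      hφ.continuousOn
    refine ⟨‖wpair ρ p.1 (p.1 - p.2)‖, ?_,
      fun w hw z hz => isMinOn_iff.mp hpmin (w, z) ⟨hw, hz⟩⟩
    exact norm_pos_iff.mpr (hker p.1 hp.1 p.2 (hSD hp.2))
  -- bound on ‖ℓ‖ on the frontier
  obtain ⟨M₀, hM₀⟩ := hKc.exists_bound_of_continuousOn hℓ_cont.continuousOn
  set M : ℝ := max M₀ 0 with hMdef
  have hM : ∀ w ∈ frontier D, ‖ℓ w‖ ≤ M := fun w hw => (hM₀ w hw).trans (le_max_left _ _)
  have hM0 : 0 ≤ M := le_max_right _ _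
  have haefr : ∀ᵐ w ∂(bM D), w ∈ frontier D :=
    ae_restrict_mem isClosed_frontier.measurableSet
  -- measurability of the integrand
  have hmeas : ∀ z : EuclideanSpace ℂ (Fin n),
      AEStronglyMeasurable (fun w => f w * ((wpair ρ w (w - z)) ^ n)⁻¹) (bM D) := by
    intro z
    exact hf.1.mul (((hwz z).measurable.pow_const n).inv.aestronglyMeasurable)
  -- integrability
  have hint : ∀ z ∈ D, Integrable (fun w => f w / (wpair ρ w (w - z)) ^ n) (bM D) := by
    intro z hz
    obtain ⟨δ, hδ, hmin⟩ := key {z} isCompact_singleton (by simpa using hz)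
    simp_rw [div_eq_mul_inv]
    refine (hf.norm.mul_const ((δ ^ n)⁻¹)).mono' (hmeas z) ?_
    filter_upwards [haefr] with w hw
    have hle : δ ≤ ‖wpair ρ w (w - z)‖ := hmin w hw z rfl
    have h0 : (0:ℝ) < ‖wpair ρ w (w - z)‖ := lt_of_lt_of_le hδ hle
    rw [norm_mul, norm_inv, norm_pow]
    have hb1 : ((‖wpair ρ w (w - z)‖) ^ n)⁻¹ ≤ (δ ^ n)⁻¹ :=
      inv_anti₀ (pow_pos hδ n) (pow_le_pow_left₀ hδ.le hle n)
    gcongr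
  refine ⟨hint, ?_⟩
  -- holomorphy
  intro z₀ hz₀
  obtain ⟨ε₀, hε₀, hball⟩ := Metric.isOpen_iff.mp hDopen z₀ hz₀
  set ε : ℝ := ε₀ / 2 with hεdef
  have hε : 0 < ε := by positivity
  have hSD : Metric.closedBall z₀ ε ⊆ D := fun x hx =>
    hball (lt_of_le_of_lt (Metric.mem_closedBall.mp hx) (by linarith))
  obtain ⟨δ, hδ, hmin⟩ := key (Metric.closedBall z₀ ε) (isCompact_closedBall _ _) hSD
  set FF : EuclideanSpace ℂ (Fin n) → EuclideanSpace ℂ (Fin n) → ℂ :=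
    fun z w => f w * ((wpair ρ w (w - z)) ^ n)⁻¹ with hFFdef
  set FF' : EuclideanSpace ℂ (Fin n) → EuclideanSpace ℂ (Fin n) →
      (EuclideanSpace ℂ (Fin n) →L[ℂ] ℂ) :=
    fun z w => f w • (((-(n : ℂ)) * ((wpair ρ w (w - z)) ^ (n + 1))⁻¹) • (-(ℓ w))) with hFF'def
  -- derivative of the kernel
  have hderiv : ∀ w ∈ frontier D, ∀ z ∈ Metric.ball z₀ ε,
      HasFDerivAt (fun z => FF z w) (FF' z w) z := by
    intro w hw z hz
    have hzD : z ∈ D := hSD (Metric.ball_subset_closedBall hz)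
    have hcne : wpair ρ w (w - z) ≠ 0 := hker w hw z hzD
    have hfun : (fun z : EuclideanSpace ℂ (Fin n) => wpair ρ w (w - z))
        = fun z => ℓ w w - ℓ w z := by
      funext z; rw [← hℓ_apply, map_sub]
    have hc : HasFDerivAt (fun z : EuclideanSpace ℂ (Fin n) => wpair ρ w (w - z))
        (-(ℓ w)) z := by
      rw [hfun]
      exact (ℓ w).hasFDerivAt.const_sub (ℓ w w)
    have hzp : (fun u : ℂ => (u ^ n)⁻¹) = fun u => u ^ (-(n : ℤ)) := by
      funext u; rw [zpow_neg, zpow_natCast]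
    have hpow : HasDerivAt (fun u : ℂ => (u ^ n)⁻¹)
        ((-(n : ℂ)) * ((wpair ρ w (w - z)) ^ (n + 1))⁻¹) (wpair ρ w (w - z)) := by
      have := hasDerivAt_zpow (-(n : ℤ)) (wpair ρ w (w - z)) (Or.inl hcne)
      rw [← hzp] at this
      refine this.congr_deriv ?_
      have h1 : (-(n : ℤ) - 1) = -((n + 1 : ℕ) : ℤ) := by push_cast; ring
      rw [h1, zpow_neg, zpow_natCast]
      push_cast
      ring
    exact (hpow.comp_hasFDerivAt z hc).const_mul (f w)
  -- measurability of FF and FF'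
  have hFF'_meas : AEStronglyMeasurable (FF' z₀) (bM D) := by
    refine hf.1.smul (AEStronglyMeasurable.fun_smul ?_ hℓ_cont.neg.aestronglyMeasurable)
    exact (measurable_const.mul
      (((hwz z₀).measurable.pow_const (n + 1)).inv)).aestronglyMeasurable
  -- bound
  have h_bound : ∀ᵐ w ∂(bM D), ∀ z ∈ Metric.ball z₀ ε,
      ‖FF' z w‖ ≤ ‖f w‖ * (n * (δ ^ (n + 1))⁻¹ * M) := by
    filter_upwards [haefr] with w hw
    intro z hz
    have hle : δ ≤ ‖wpair ρ w (w - z)‖ := hmin w hw z (Metric.ball_subset_closedBall hz)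
    have hb1 : (‖wpair ρ w (w - z)‖ ^ (n + 1))⁻¹ ≤ (δ ^ (n + 1))⁻¹ :=
      inv_anti₀ (pow_pos hδ _) (pow_le_pow_left₀ hδ.le hle _)
    have hb2 := hM w hw
    have e1 := norm_smul (f w)
      (((-(n : ℂ)) * ((wpair ρ w (w - z)) ^ (n + 1))⁻¹) • (-(ℓ w)))
    have e2 := norm_smul ((-(n : ℂ)) * ((wpair ρ w (w - z)) ^ (n + 1))⁻¹) (-(ℓ w))
    simp only [hFF'def]
    rw [e1, e2, norm_neg, norm_mul, norm_neg, norm_inv, norm_pow, Complex.norm_natCast]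
    gcongr
  have h_diff : ∀ᵐ w ∂(bM D), ∀ z ∈ Metric.ball z₀ ε,
      HasFDerivAt (fun z => FF z w) (FF' z w) z := by
    filter_upwards [haefr] with w hw
    exact hderiv w hw
  have hFF_int : Integrable (FF z₀) (bM D) := by
    have := hint z₀ hz₀
    simpa only [hFFdef, div_eq_mul_inv] using this
  have hmain : HasFDerivAt (fun z => ∫ w, FF z w ∂(bM D)) (∫ w, FF' z₀ w ∂(bM D)) z₀ :=
    hasFDerivAt_integral_of_dominated_of_fderiv_le (Metric.ball_mem_nhds z₀ hε)
      (Filter.Eventually.of_forall fun z => hmeas z) hFF_int hFF'_meas h_bound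
      (hf.norm.mul_const _) h_diff
  have hCL : cauchyLeray D ρ f = fun z =>
      (1 / (2 * (Real.pi : ℂ) * Complex.I) ^ n) * ∫ w, FF z w ∂(bM D) := by
    funext z
    simp only [cauchyLeray, hFFdef, div_eq_mul_inv]
  rw [hCL]
  exact (hmain.differentiableAt.const_mul _).differentiableWithinAt

end
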